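/- In Setup B, let J ∈ Λ with n+1 ∈ J and let c = (c_i)_{i∈J} be integers. Then the set F(J,c) is independent of the choice of i₀ ∈ I'∖J: for any two choices i₀, i₀' ∈ I'∖J, the unions ⋃_{𝔪 admissible} V(J,c,𝔪) formed with respect to i₀ and with respect to i₀' are equal as subsets of ℝⁿ. -/

import Mathlib

open scoped RealInnerProductSpace BigOperators

noncomputable section

/-- Euclidean space `ℝⁿ` with the standard inner product. -/
abbrev E (n : ℕ) : Type := EuclideanSpace ℝ (Fin n)

/-- The index set `I' = {1,…,n'}` inside `Ī = {1,…,n+1}` (index `Fin.last n`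
plays the role of `n+1`). -/
def Iprime (n n' : ℕ) : Finset (Fin (n + 1)) := Finset.univ.filter fun i => i.val < n'

/-- `C(J,c) := {x ∈ ℝⁿ : ⟨x, b_i⟩ > c_i for all i ∈ J}`. -/
def CSet (n : ℕ) (b : Fin (n + 1) → E n) (J : Finset (Fin (n + 1)))
    (c : Fin (n + 1) → ℤ) : Set (E n) :=
  {x | ∀ i ∈ J, (c i : ℝ) < ⟪x, b i⟫}

/-- A multi-index `𝔪 = (m_i)_{i ∈ I'∖{i₀}}` is admissible if `m_i ≥ 0` for every
`i ∈ I' ∩ J` (recall `i₀ ∉ J`). -/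
def Admissible (n n' : ℕ) (J : Finset (Fin (n + 1))) (m : Fin (n + 1) → ℤ) : Prop :=
  ∀ i ∈ Iprime n n' ∩ J, 0 ≤ m i

/-- The ceiling bound
`⌈(c_{n+1} − Σ_{i∈I'∩J} α_i(c_i+m_i) − Σ_{i∈I'∩K₁} α_i m_i)/α_{i₀}⌉`,
where `K₁ = Ī∖(J∪{i₀})`, so `I'∩K₁ = (I'∖J)∖{i₀}`. -/
def ceilB (n n' : ℕ) (α : Fin (n + 1) → ℚ) (J : Finset (Fin (n + 1)))
    (i₀ : Fin (n + 1)) (c m : Fin (n + 1) → ℤ) : ℤ :=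
  ⌈((c (Fin.last n) : ℚ) - ∑ i ∈ Iprime n n' ∩ J, α i * ((c i : ℚ) + (m i : ℚ))
      - ∑ i ∈ (Iprime n n' \ J).erase i₀, α i * (m i : ℚ)) / α i₀⌉

/-- `V(J,c,𝔪)` as in Setup B. -/
def VSet (n n' : ℕ) (b : Fin (n + 1) → E n) (α : Fin (n + 1) → ℚ)
    (J : Finset (Fin (n + 1))) (i₀ : Fin (n + 1)) (c m : Fin (n + 1) → ℤ) :
    Set (E n) :=
  {x | (∀ i ∈ Iprime n n' ∩ J, ((c i : ℝ) + (m i : ℝ)) < ⟪x, b i⟫)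
    ∧ (∀ i ∈ (Iprime n n' \ J).erase i₀, (m i : ℝ) < ⟪x, b i⟫)
    ∧ (∀ i ∈ (J \ Iprime n n').erase (Fin.last n), (c i : ℝ) < ⟪x, b i⟫)
    ∧ ((ceilB n n' α J i₀ c m : ℝ) < ⟪x, b i₀⟫)}

/-- `F(J,c) := ⋃_{𝔪 admissible} V(J,c,𝔪)` (for `n+1 ∈ J`, with the choice `i₀`). -/
def FSetB (n n' : ℕ) (b : Fin (n + 1) → E n) (α : Fin (n + 1) → ℚ)
    (J : Finset (Fin (n + 1))) (i₀ : Fin (n + 1)) (c : Fin (n + 1) → ℤ) : Set (E n) :=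
  {x | ∃ m : Fin (n + 1) → ℤ, Admissible n n' J m ∧ x ∈ VSet n n' b α J i₀ c m}

/-- `F(J,c)` in general: the union above when `n+1 ∈ J`, and `C(J,c)` otherwise. -/
def FSetB' (n n' : ℕ) (b : Fin (n + 1) → E n) (α : Fin (n + 1) → ℚ)
    (J : Finset (Fin (n + 1))) (i₀ : Fin (n + 1)) (c : Fin (n + 1) → ℤ) : Set (E n) :=
  if Fin.last n ∈ J then FSetB n n' b α J i₀ c else CSet n b J c

/-- A symmetric characterization of membership in `FSetB`, not depending on `i₀`. -/
lemma fsetB_mem_iff (n n' : ℕ) (b : Fin (n + 1) → E n) (α : Fin (n + 1) → ℚ)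
    (hα : ∀ i : Fin (n + 1), i.val < n' → 0 < α i)
    (J : Finset (Fin (n + 1))) (i₀ : Fin (n + 1)) (hi₀ : i₀ ∈ Iprime n n' \ J)
    (c : Fin (n + 1) → ℤ) (x : E n) :
    x ∈ FSetB n n' b α J i₀ c ↔
      ((∀ i ∈ Iprime n n' ∩ J, (c i : ℝ) < ⟪x, b i⟫)
      ∧ (∀ i ∈ (J \ Iprime n n').erase (Fin.last n), (c i : ℝ) < ⟪x, b i⟫)
      ∧ ((c (Fin.last n) : ℚ) ≤ ∑ i ∈ Iprime n n',
          α i * ((if i ∈ J then (c i : ℚ) else 0)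
            + ((⌈⟪x, b i⟫ - (if i ∈ J then (c i : ℝ) else 0)⌉ : ℤ) : ℚ) - 1))) := by
  have hαpos : ∀ i ∈ Iprime n n', 0 < α i := by
    intro i hi
    exact hα i (by simpa [Iprime] using hi)
  obtain ⟨hi₀I, hi₀J⟩ := Finset.mem_sdiff.mp hi₀
  have hα₀ : 0 < α i₀ := hαpos i₀ hi₀I
  set N : Fin (n + 1) → ℤ := fun i =>
    ⌈⟪x, b i⟫ - (if i ∈ J then (c i : ℝ) else 0)⌉ - 1 with hN
  -- sum splitting
  have hsplit : ∀ f : Fin (n + 1) → ℚ,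
      ∑ i ∈ Iprime n n', f i
        = ∑ i ∈ Iprime n n' ∩ J, f i
          + (∑ i ∈ (Iprime n n' \ J).erase i₀, f i + f i₀) := by
    intro f
    rw [Finset.sum_erase_add _ _ hi₀, Finset.sum_inter_add_sum_sdiff]
  have hNi₀ : (N i₀ : ℝ) = (⌈⟪x, b i₀⟫⌉ : ℤ) - 1 := by
    simp [hN, hi₀J]
  constructor
  · rintro ⟨m, hadm, h1, h2, h3, h4⟩
    refine ⟨?_, h3, ?_⟩
    · intro i hi
      have hmi : (0 : ℝ) ≤ (m i : ℝ) := by exact_mod_cast hadm i hi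
      have := h1 i hi
      linarith
    · -- the key inequality
      have hceil : ceilB n n' α J i₀ c m ≤ N i₀ := by
      -- from h4 : (ceilB : ℝ) < ⟪x, b i₀⟫
        have h5 : ceilB n n' α J i₀ c m < ⌈⟪x, b i₀⟫⌉ := by
          exact Int.lt_ceil.mpr h4
        have : (N i₀ : ℤ) = ⌈⟪x, b i₀⟫⌉ - 1 := by
          have := hNi₀; exact_mod_cast this
        omega
      have hq : ((c (Fin.last n) : ℚ)
          - ∑ i ∈ Iprime n n' ∩ J, α i * ((c i : ℚ) + (m i : ℚ))
          - ∑ i ∈ (Iprime n n' \ J).erase i₀, α i * (m i : ℚ)) / α i₀ ≤ (N i₀ : ℚ) := by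
        exact_mod_cast (Int.ceil_le.mp hceil)
      have hnum : (c (Fin.last n) : ℚ)
          ≤ ∑ i ∈ Iprime n n' ∩ J, α i * ((c i : ℚ) + (m i : ℚ))
            + ∑ i ∈ (Iprime n n' \ J).erase i₀, α i * (m i : ℚ)
            + α i₀ * (N i₀ : ℚ) := by
        have := (div_le_iff₀ hα₀).mp hq
        linarith
      have hmN1 : ∀ i ∈ Iprime n n' ∩ J, m i ≤ N i := by
        intro i hi
        have hiJ : i ∈ J := (Finset.mem_inter.mp hi).2
        have := h1 i hi
        have : m i < ⌈⟪x, b i⟫ - (c i : ℝ)⌉ := Int.lt_ceil.mpr (by linarith)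
        simp only [hN, hiJ, if_pos]
        omega
      have hmN2 : ∀ i ∈ (Iprime n n' \ J).erase i₀, m i ≤ N i := by
        intro i hi
        have hiJ : i ∉ J := (Finset.mem_sdiff.mp (Finset.mem_of_mem_erase hi)).2
        have := h2 i hi
        have : m i < ⌈⟪x, b i⟫ - (0 : ℝ)⌉ := Int.lt_ceil.mpr (by simpa using this)
        simp only [hN, hiJ, if_neg, not_false_iff]
        omega
      have hs1 : ∑ i ∈ Iprime n n' ∩ J, α i * ((c i : ℚ) + (m i : ℚ))
          ≤ ∑ i ∈ Iprime n n' ∩ J, α i * ((c i : ℚ) + (N i : ℚ)) := by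
        refine Finset.sum_le_sum fun i hi => ?_
        have h1' : (m i : ℚ) ≤ (N i : ℚ) := by exact_mod_cast hmN1 i hi
        have h2' : 0 < α i := hαpos i (Finset.mem_inter.mp hi).1
        nlinarith
      have hs2 : ∑ i ∈ (Iprime n n' \ J).erase i₀, α i * (m i : ℚ)
          ≤ ∑ i ∈ (Iprime n n' \ J).erase i₀, α i * (N i : ℚ) := by
        refine Finset.sum_le_sum fun i hi => ?_
        have h1' : (m i : ℚ) ≤ (N i : ℚ) := by exact_mod_cast hmN2 i hi
        have h2' : 0 < α i :=
          hαpos i (Finset.mem_sdiff.mp (Finset.mem_of_mem_erase hi)).1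
        nlinarith
      rw [hsplit]
      have he1 : ∑ i ∈ Iprime n n' ∩ J,
          α i * ((if i ∈ J then (c i : ℚ) else 0)
            + ((⌈⟪x, b i⟫ - (if i ∈ J then (c i : ℝ) else 0)⌉ : ℤ) : ℚ) - 1)
          = ∑ i ∈ Iprime n n' ∩ J, α i * ((c i : ℚ) + (N i : ℚ)) := by
        refine Finset.sum_congr rfl fun i hi => ?_
        have hiJ : i ∈ J := (Finset.mem_inter.mp hi).2
        simp only [hN, if_pos hiJ]
        push_cast
        ring
      have he2 : ∑ i ∈ (Iprime n n' \ J).erase i₀,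
          α i * ((if i ∈ J then (c i : ℚ) else 0)
            + ((⌈⟪x, b i⟫ - (if i ∈ J then (c i : ℝ) else 0)⌉ : ℤ) : ℚ) - 1)
          = ∑ i ∈ (Iprime n n' \ J).erase i₀, α i * (N i : ℚ) := by
        refine Finset.sum_congr rfl fun i hi => ?_
        have hiJ : i ∉ J := (Finset.mem_sdiff.mp (Finset.mem_of_mem_erase hi)).2
        simp only [hN, if_neg hiJ]
        push_cast
        ring
      have he3 : α i₀ * ((if i₀ ∈ J then (c i₀ : ℚ) else 0)
            + ((⌈⟪x, b i₀⟫ - (if i₀ ∈ J then (c i₀ : ℝ) else 0)⌉ : ℤ) : ℚ) - 1)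
          = α i₀ * (N i₀ : ℚ) := by
        simp only [hN, if_neg hi₀J]
        push_cast
        ring
      rw [he1, he2, he3]
      linarith
  · rintro ⟨hA, hB, hC⟩
    refine ⟨N, ?_, ?_, ?_, hB, ?_⟩
    · -- admissibility
      intro i hi
      have hiJ : i ∈ J := (Finset.mem_inter.mp hi).2
      have := hA i hi
      have hpos : (0 : ℤ) < ⌈⟪x, b i⟫ - (c i : ℝ)⌉ := Int.ceil_pos.mpr (by linarith)
      simp only [hN, hiJ, if_pos]
      omega
    · intro i hi
      have hiJ : i ∈ J := (Finset.mem_inter.mp hi).2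
      have hlt : (⌈⟪x, b i⟫ - (c i : ℝ)⌉ : ℝ) < ⟪x, b i⟫ - (c i : ℝ) + 1 :=
        Int.ceil_lt_add_one _
      have hNi : (N i : ℝ) = (⌈⟪x, b i⟫ - (c i : ℝ)⌉ : ℤ) - 1 := by
        simp [hN, hiJ]
      rw [hNi]
      push_cast
      linarith
    · intro i hi
      have hiJ : i ∉ J := (Finset.mem_sdiff.mp (Finset.mem_of_mem_erase hi)).2
      have hlt : (⌈⟪x, b i⟫⌉ : ℝ) < ⟪x, b i⟫ + 1 := by
        have := Int.ceil_lt_add_one (⟪x, b i⟫); linarith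
      have hNi : (N i : ℝ) = (⌈⟪x, b i⟫⌉ : ℤ) - 1 := by
        simp [hN, hiJ]
      rw [hNi]
      push_cast
      linarith
    · -- ceiling inequality with m = N
      have he1 : ∑ i ∈ Iprime n n' ∩ J,
          α i * ((if i ∈ J then (c i : ℚ) else 0)
            + ((⌈⟪x, b i⟫ - (if i ∈ J then (c i : ℝ) else 0)⌉ : ℤ) : ℚ) - 1)
          = ∑ i ∈ Iprime n n' ∩ J, α i * ((c i : ℚ) + (N i : ℚ)) := by
        refine Finset.sum_congr rfl fun i hi => ?_
        have hiJ : i ∈ J := (Finset.mem_inter.mp hi).2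
        simp only [hN, if_pos hiJ]
        push_cast
        ring
      have he2 : ∑ i ∈ (Iprime n n' \ J).erase i₀,
          α i * ((if i ∈ J then (c i : ℚ) else 0)
            + ((⌈⟪x, b i⟫ - (if i ∈ J then (c i : ℝ) else 0)⌉ : ℤ) : ℚ) - 1)
          = ∑ i ∈ (Iprime n n' \ J).erase i₀, α i * (N i : ℚ) := by
        refine Finset.sum_congr rfl fun i hi => ?_
        have hiJ : i ∉ J := (Finset.mem_sdiff.mp (Finset.mem_of_mem_erase hi)).2
        simp only [hN, if_neg hiJ]
        push_cast
        ring
      have he3 : α i₀ * ((if i₀ ∈ J then (c i₀ : ℚ) else 0)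
            + ((⌈⟪x, b i₀⟫ - (if i₀ ∈ J then (c i₀ : ℝ) else 0)⌉ : ℤ) : ℚ) - 1)
          = α i₀ * (N i₀ : ℚ) := by
        simp only [hN, if_neg hi₀J]
        push_cast
        ring
      rw [hsplit, he1, he2, he3] at hC
      have hnum : (c (Fin.last n) : ℚ)
          - ∑ i ∈ Iprime n n' ∩ J, α i * ((c i : ℚ) + (N i : ℚ))
          - ∑ i ∈ (Iprime n n' \ J).erase i₀, α i * (N i : ℚ)
          ≤ α i₀ * (N i₀ : ℚ) := by linarith
      have hq : ((c (Fin.last n) : ℚ)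
          - ∑ i ∈ Iprime n n' ∩ J, α i * ((c i : ℚ) + (N i : ℚ))
          - ∑ i ∈ (Iprime n n' \ J).erase i₀, α i * (N i : ℚ)) / α i₀ ≤ (N i₀ : ℚ) :=
        (div_le_iff₀ hα₀).mpr (by linarith)
      have hceil : ceilB n n' α J i₀ c N ≤ N i₀ := Int.ceil_le.mpr hq
      have hlast' : (N i₀ : ℝ) < ⟪x, b i₀⟫ := by
        rw [hNi₀]
        have := Int.ceil_lt_add_one (⟪x, b i₀⟫)
        push_cast
        push_cast at this
        linarith
      have : (ceilB n n' α J i₀ c N : ℝ) ≤ (N i₀ : ℝ) := by exact_mod_cast hceil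
      linarith

/-- Setup B: for `J ∈ Λ` with `n+1 ∈ J` and integers `c`, the set
`F(J,c)` is independent of the choice of `i₀ ∈ I'∖J`. -/
theorem stmt9 (n n' : ℕ) (hn'1 : 1 ≤ n') (hn'n : n' ≤ n)
    (b : Fin (n + 1) → E n) (α : Fin (n + 1) → ℚ)
    (hb : LinearIndependent ℝ fun i : Fin n => b i.castSucc)
    (hspan : Submodule.span ℝ (Set.range fun i : Fin n => b i.castSucc) = ⊤)
    (hα : ∀ i : Fin (n + 1), i.val < n' → 0 < α i)
    (hαsum : ∑ i ∈ Iprime n n', α i ≤ 1)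
    (hlast : b (Fin.last n) = ∑ i ∈ Iprime n n', (α i : ℝ) • b i)
    (J : Finset (Fin (n + 1))) (hJne : J ≠ Finset.univ)
    (hJI : ¬ Iprime n n' ⊆ J) (hJlast : Fin.last n ∈ J)
    (i₀ i₀' : Fin (n + 1)) (hi₀ : i₀ ∈ Iprime n n' \ J) (hi₀' : i₀' ∈ Iprime n n' \ J)
    (c : Fin (n + 1) → ℤ) :
    FSetB n n' b α J i₀ c = FSetB n n' b α J i₀' c := by
  ext x
  rw [fsetB_mem_iff n n' b α hα J i₀ hi₀ c x, fsetB_mem_iff n n' b α hα J i₀' hi₀' c x]
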